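/- arXiv:0809.4381 — 3 statements merged into one kernel-verified Lean document; each statement's English description precedes it below -/
import Mathlib

section
/- Let k be a field, let F ∈ k[t] be a monic polynomial of degree n ≥ 2, let a₀ be the constant coefficient of F and a₁ the coefficient of t in F, and let b ∈ k with b ≠ a₁. Then the two-variable polynomial F(t) − b·t − a₀ − x^(n−1) is irreducible in the polynomial ring k[x,t]. -/
open Polynomial MvPolynomial

noncomputable def stmt6E (k : Type*) [Field k] :
    MvPolynomial (Fin 2) k ≃ₐ[k] Polynomial (Polynomial k) :=
  (MvPolynomial.finSuccEquiv k 1).trans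
    (Polynomial.mapAlgEquiv (((MvPolynomial.renameEquiv k (Equiv.equivPUnit.{1,1} (Fin 1))).trans
      (MvPolynomial.pUnitAlgEquiv k))))

theorem stmt6E_X0 (k : Type*) [Field k] : stmt6E k (MvPolynomial.X 0) = Polynomial.X := by
  simp [stmt6E, MvPolynomial.finSuccEquiv_X_zero]

theorem stmt6E_X1 (k : Type*) [Field k] :
    stmt6E k (MvPolynomial.X 1) = Polynomial.C Polynomial.X := by
  have h : (1 : Fin 2) = Fin.succ 0 := rfl
  rw [stmt6E, AlgEquiv.trans_apply, h, MvPolynomial.finSuccEquiv_X_succ]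
  simp

theorem stmt6E_C (k : Type*) [Field k] (a : k) :
    stmt6E k (MvPolynomial.C a) = Polynomial.C (Polynomial.C a) := by
  rw [stmt6E, AlgEquiv.trans_apply, MvPolynomial.finSuccEquiv_apply]
  simp

/-- For a field `k`, a monic `F ∈ k[t]` of degree `n ≥ 2` with
constant coefficient `a₀` and linear coefficient `a₁`, and `b ∈ k` with
`b ≠ a₁`, the polynomial `F(t) − b·t − a₀ − x^(n−1)` is irreducible in
`k[x,t]`. Here variable `0` is `x` and variable `1` is `t`. -/
theorem stmt_6 (k : Type*) [Field k] (n : ℕ) (hn : 2 ≤ n) (F : Polynomial k)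
    (hF : F.Monic) (hdeg : F.natDegree = n) (b : k) (hb : b ≠ F.coeff 1) :
    Irreducible
      (Polynomial.aeval (MvPolynomial.X 1 : MvPolynomial (Fin 2) k) F -
          MvPolynomial.C b * MvPolynomial.X 1 - MvPolynomial.C (F.coeff 0) -
          MvPolynomial.X 0 ^ (n - 1)) := by
  set c : Polynomial k := F - Polynomial.C b * Polynomial.X - Polynomial.C (F.coeff 0) with hc
  set f : Polynomial (Polynomial k) := Polynomial.C c - Polynomial.X ^ (n - 1) with hf
  have hn1 : 1 ≤ n - 1 := by omega
  have hn1ne : n - 1 ≠ 0 := by omega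
  -- coefficients of c
  have hc0 : c.coeff 0 = 0 := by simp [hc]
  have hc1 : c.coeff 1 = F.coeff 1 - b := by simp [hc]
  have hc1ne : c.coeff 1 ≠ 0 := by
    rw [hc1]; intro h; exact hb (by linear_combination -h)
  -- the Eisenstein prime
  set P : Ideal (Polynomial k) := Ideal.span {Polynomial.X} with hP
  have hPprime : P.IsPrime := by
    rw [hP, Ideal.span_singleton_prime Polynomial.X_ne_zero]
    exact Polynomial.prime_X
  have hXc : Polynomial.X ∣ c := Polynomial.X_dvd_iff.mpr hc0
  have hX2c : ¬ (Polynomial.X ^ 2 ∣ c) := by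
    rw [Polynomial.X_pow_dvd_iff]
    intro h
    exact hc1ne (h 1 one_lt_two)
  -- degree of f
  have hdegCc : (Polynomial.C c).degree < (Polynomial.X ^ (n - 1) : Polynomial (Polynomial k)).degree := by
    rw [Polynomial.degree_X_pow]
    exact lt_of_le_of_lt Polynomial.degree_C_le (by exact_mod_cast Nat.cast_pos.mpr hn1)
  have hdegf : f.degree = (n - 1 : ℕ) := by
    rw [hf, Polynomial.degree_sub_eq_right_of_degree_lt hdegCc, Polynomial.degree_X_pow]
  -- coefficients of f
  have hcoefff : ∀ m : ℕ, m ≠ n - 1 → f.coeff m = if m = 0 then c else 0 := by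
    intro m hm
    rw [hf, Polynomial.coeff_sub, Polynomial.coeff_X_pow, Polynomial.coeff_C]
    simp [hm]
  have hcoefftop : f.coeff (n - 1) = -1 := by
    rw [hf, Polynomial.coeff_sub, Polynomial.coeff_X_pow, Polynomial.coeff_C]
    simp [hn1ne]
  have hlead : f.leadingCoeff = -1 := by
    have : f.natDegree = n - 1 := Polynomial.natDegree_eq_of_degree_eq_some hdegf
    rw [Polynomial.leadingCoeff, this, hcoefftop]
  -- Eisenstein
  have hfirr : Irreducible f := by
    apply Polynomial.irreducible_of_eisenstein_criterion hPprime
    · rw [hlead]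
      intro h
      exact hPprime.ne_top (Ideal.eq_top_of_isUnit_mem P h (IsUnit.neg isUnit_one))
    · intro m hm
      rw [hdegf] at hm
      have hmlt : m < n - 1 := by exact_mod_cast hm
      rw [hcoefff m (by omega)]
      by_cases h0 : m = 0
      · simp only [h0, if_pos rfl]
        exact Ideal.mem_span_singleton.mpr hXc
      · simp [h0]
    · rw [hdegf]; exact_mod_cast Nat.cast_pos.mpr hn1
    · rw [hcoefff 0 (by omega)]
      simp only [if_pos rfl]
      rw [hP, Ideal.span_singleton_pow, Ideal.mem_span_singleton]
      exact hX2c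
    · intro r hr
      have := (Polynomial.C_dvd_iff_dvd_coeff r f).mp hr (n - 1)
      rw [hcoefftop] at this
      exact isUnit_of_dvd_unit this (IsUnit.neg isUnit_one)
  -- transfer through the algebra equivalence
  have hEG : stmt6E k
      (Polynomial.aeval (MvPolynomial.X 1 : MvPolynomial (Fin 2) k) F -
        MvPolynomial.C b * MvPolynomial.X 1 - MvPolynomial.C (F.coeff 0) -
        MvPolynomial.X 0 ^ (n - 1)) = f := by
    have haev : stmt6E k (Polynomial.aeval (MvPolynomial.X 1 : MvPolynomial (Fin 2) k) F)
        = Polynomial.C F := by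
      have h1 := Polynomial.aeval_algHom_apply (stmt6E k) (MvPolynomial.X 1) F
      have h2 := Polynomial.aeval_algHom_apply
        (Polynomial.CAlgHom : Polynomial k →ₐ[k] Polynomial (Polynomial k)) Polynomial.X F
      rw [← h1, stmt6E_X1,
        show (Polynomial.C Polynomial.X : Polynomial (Polynomial k))
          = (Polynomial.CAlgHom : Polynomial k →ₐ[k] Polynomial (Polynomial k))
            Polynomial.X from rfl, h2, Polynomial.aeval_X_left_apply]
      rfl
    rw [map_sub, map_sub, map_sub, map_mul, map_pow, haev, stmt6E_X0, stmt6E_X1, stmt6E_C,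
      stmt6E_C, hf, hc, Polynomial.C_sub, Polynomial.C_sub, Polynomial.C_mul]
  exact (MulEquiv.irreducible_iff (stmt6E k)).mp (hEG ▸ hfirr)
end

section
/- Let k be an algebraically closed field of odd characteristic p, let n ≥ 2 be an integer with p ∤ n·(n−1), and let F ∈ k[t] be monic of degree n. Then there are at most n − 1 elements d ∈ k for which the degree-n homogenization of the polynomial F(t) − 2x^(n−1) + t^(n−1) − d fails to define a smooth projective plane curve; that is, the set of d ∈ k such that the homogenization H_d ∈ k[X,T,Z] of F(t) − 2x^(n−1) + t^(n−1) − d has a common zero with its three partial derivatives in k³ ∖ {(0,0,0)} has cardinality at most n − 1. -/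
open MvPolynomial

/-- The degree-`d` homogenization of a two-variable polynomial `f(x,t)`
(variable `0` is `x`, variable `1` is `t`) as a polynomial in three variables
`X, T, Z` (variable `0` is `X`, `1` is `T`, `2` is `Z`): each monomial
`c·x^i·t^j` of `f` becomes `c·X^i·T^j·Z^(d−i−j)`.  For `d` the total degree of
`f` this is `Z^d·f(X/Z, T/Z)`. -/
noncomputable def homogenize {K : Type*} [CommSemiring K] (d : ℕ)
    (f : MvPolynomial (Fin 2) K) : MvPolynomial (Fin 3) K :=
  f.support.sum fun m =>
    MvPolynomial.monomial
      (Finsupp.single (0 : Fin 3) (m 0) + Finsupp.single (1 : Fin 3) (m 1) +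
        Finsupp.single (2 : Fin 3) (d - (m 0 + m 1)))
      (MvPolynomial.coeff m f)

section hom
variable {K : Type*} [CommRing K] (d : ℕ)

noncomputable def phi (d : ℕ) (m : Fin 2 →₀ ℕ) : Fin 3 →₀ ℕ :=
  Finsupp.single (0 : Fin 3) (m 0) + Finsupp.single (1 : Fin 3) (m 1) +
        Finsupp.single (2 : Fin 3) (d - (m 0 + m 1))

lemma hom_eq_sum (f : MvPolynomial (Fin 2) K) :
    homogenize d f = Finsupp.sum (AddMonoidAlgebra.coeff f) (fun m c => MvPolynomial.monomial (phi d m) c) := rfl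

lemma hom_add (f g : MvPolynomial (Fin 2) K) :
    homogenize d (f + g) = homogenize d f + homogenize d g := by
  simp only [hom_eq_sum, AddMonoidAlgebra.coeff_add]
  exact Finsupp.sum_add_index' (fun a => by simp) (fun a b c => by simp)

lemma hom_sub (f g : MvPolynomial (Fin 2) K) :
    homogenize d (f - g) = homogenize d f - homogenize d g := by
  simp only [hom_eq_sum, AddMonoidAlgebra.coeff_sub]
  exact Finsupp.sum_sub_index (fun a b c => by simp [map_sub])

lemma hom_monomial (m : Fin 2 →₀ ℕ) (c : K) :
    homogenize d (MvPolynomial.monomial m c) = MvPolynomial.monomial (phi d m) c := by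
  rw [hom_eq_sum]
  exact Finsupp.sum_single_index (by simp)

lemma hom_finset_sum {ι : Type*} (s : Finset ι) (g : ι → MvPolynomial (Fin 2) K) :
    homogenize d (∑ i ∈ s, g i) = ∑ i ∈ s, homogenize d (g i) := by
  classical
  induction s using Finset.induction with
  | empty => simp [hom_eq_sum]
  | insert a s h ih => rw [Finset.sum_insert h, Finset.sum_insert h, hom_add, ih]
end hom

section M
variable {K : Type*} [CommRing K]

noncomputable def M (a b c : ℕ) (e : K) : MvPolynomial (Fin 3) K :=
  MvPolynomial.monomial
    (Finsupp.single (0 : Fin 3) a + Finsupp.single (1 : Fin 3) b + Finsupp.single (2 : Fin 3) c) e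

lemma evalM (v : Fin 3 → K) (a b c : ℕ) (e : K) :
    MvPolynomial.eval v (M a b c e) = e * v 0 ^ a * v 1 ^ b * v 2 ^ c := by
  rw [M, MvPolynomial.eval_monomial]
  rw [Finsupp.prod_add_index' (by simp) (fun i x y => pow_add _ _ _),
      Finsupp.prod_add_index' (by simp) (fun i x y => pow_add _ _ _),
      Finsupp.prod_single_index (by simp), Finsupp.prod_single_index (by simp),
      Finsupp.prod_single_index (by simp)]
  ring

lemma exp_apply (a b c : ℕ) (j : Fin 3) :
    (Finsupp.single (0 : Fin 3) a + Finsupp.single (1 : Fin 3) b + Finsupp.single (2 : Fin 3) c) j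
      = if j = 0 then a else if j = 1 then b else c := by
  fin_cases j <;> simp [Finsupp.single_apply]

lemma pdM0 (a b c : ℕ) (e : K) :
    MvPolynomial.pderiv 0 (M a b c e) = M (a - 1) b c (e * a) := by
  rw [M, MvPolynomial.pderiv_monomial, M]
  have hs : (Finsupp.single (0 : Fin 3) a + Finsupp.single (1 : Fin 3) b +
      Finsupp.single (2 : Fin 3) c) - Finsupp.single (0 : Fin 3) 1 =
      Finsupp.single (0 : Fin 3) (a - 1) + Finsupp.single (1 : Fin 3) b +
      Finsupp.single (2 : Fin 3) c := by
    ext j; fin_cases j <;> simp [Finsupp.single_apply, Finsupp.tsub_apply]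
  rw [hs, exp_apply]; rfl

lemma pdM1 (a b c : ℕ) (e : K) :
    MvPolynomial.pderiv 1 (M a b c e) = M a (b - 1) c (e * b) := by
  rw [M, MvPolynomial.pderiv_monomial, M]
  have hs : (Finsupp.single (0 : Fin 3) a + Finsupp.single (1 : Fin 3) b +
      Finsupp.single (2 : Fin 3) c) - Finsupp.single (1 : Fin 3) 1 =
      Finsupp.single (0 : Fin 3) a + Finsupp.single (1 : Fin 3) (b - 1) +
      Finsupp.single (2 : Fin 3) c := by
    ext j; fin_cases j <;> simp [Finsupp.single_apply, Finsupp.tsub_apply]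
  rw [hs, exp_apply]; rfl

lemma pdM2 (a b c : ℕ) (e : K) :
    MvPolynomial.pderiv 2 (M a b c e) = M a b (c - 1) (e * c) := by
  rw [M, MvPolynomial.pderiv_monomial, M]
  have hs : (Finsupp.single (0 : Fin 3) a + Finsupp.single (1 : Fin 3) b +
      Finsupp.single (2 : Fin 3) c) - Finsupp.single (2 : Fin 3) 1 =
      Finsupp.single (0 : Fin 3) a + Finsupp.single (1 : Fin 3) b +
      Finsupp.single (2 : Fin 3) (c - 1) := by
    ext j; fin_cases j <;> simp [Finsupp.single_apply, Finsupp.tsub_apply]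
  rw [hs, exp_apply]; rfl

lemma M_zero (a b c : ℕ) : M a b c (0 : K) = 0 := by simp [M]
end M

section exp
variable {K : Type*} [CommRing K]

lemma hom1 (n i : ℕ) (c : K) :
    homogenize n (MvPolynomial.monomial (Finsupp.single (1 : Fin 2) i) c) = M 0 i (n - i) c := by
  rw [hom_monomial, M, phi]
  congr 2 <;> simp [Finsupp.single_apply]

lemma hom0 (n j : ℕ) (c : K) :
    homogenize n (MvPolynomial.monomial (Finsupp.single (0 : Fin 2) j) c) = M j 0 (n - j) c := by
  rw [hom_monomial, M, phi]
  congr 2 <;> simp [Finsupp.single_apply]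

lemma homC (n : ℕ) (c : K) :
    homogenize n (MvPolynomial.C c) = M 0 0 n c := by
  rw [MvPolynomial.C_apply, hom_monomial, M, phi]
  congr 2 <;> simp

lemma homP_eq (n : ℕ) (F : Polynomial K) (d : K) :
    homogenize n
      (Polynomial.aeval (MvPolynomial.X 1 : MvPolynomial (Fin 2) K) F -
        2 * MvPolynomial.X 0 ^ (n - 1) + MvPolynomial.X 1 ^ (n - 1) -
        MvPolynomial.C d)
    = (∑ i ∈ F.support, M 0 i (n - i) (F.coeff i))
      - M (n - 1) 0 (n - (n - 1)) 2 + M 0 (n - 1) (n - (n - 1)) 1 - M 0 0 n d := by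
  have h1 : (Polynomial.aeval (MvPolynomial.X 1 : MvPolynomial (Fin 2) K) F)
      = ∑ i ∈ F.support, MvPolynomial.monomial (Finsupp.single (1 : Fin 2) i) (F.coeff i) := by
    rw [Polynomial.aeval_def, Polynomial.eval₂_eq_sum, Polynomial.sum_def]
    refine Finset.sum_congr rfl fun i _ => ?_
    rw [← MvPolynomial.C_mul_X_pow_eq_monomial]
    rfl
  have h2 : (2 * MvPolynomial.X 0 ^ (n - 1) : MvPolynomial (Fin 2) K)
      = MvPolynomial.monomial (Finsupp.single (0 : Fin 2) (n - 1)) 2 := by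
    rw [← MvPolynomial.C_mul_X_pow_eq_monomial, map_ofNat]
  have h3 : (MvPolynomial.X 1 ^ (n - 1) : MvPolynomial (Fin 2) K)
      = MvPolynomial.monomial (Finsupp.single (1 : Fin 2) (n - 1)) 1 :=
    MvPolynomial.X_pow_eq_monomial
  rw [h1, h2, h3, hom_sub, hom_add, hom_sub, hom_finset_sum, homC, hom0, hom1]
  congr 3
  refine Finset.sum_congr rfl fun i _ => ?_
  rw [hom1]
end exp

section key
variable {k : Type*} [Field k]

lemma evalDF (F : Polynomial k) (s : k) :
    (Polynomial.derivative F).eval s = ∑ i ∈ F.support, F.coeff i * i * s ^ (i - 1) := by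
  rw [Polynomial.derivative_apply, Polynomial.sum_def, Polynomial.eval_finset_sum]
  simp

lemma evalF (F : Polynomial k) (s : k) :
    F.eval s = ∑ i ∈ F.support, F.coeff i * s ^ i := by
  rw [Polynomial.eval_eq_sum, Polynomial.sum_def]

lemma key (p : ℕ) (hp : CharP k p) (hodd : Odd p) (n : ℕ) (hn : 2 ≤ n)
    (hpn : ¬ p ∣ n * (n - 1)) (F : Polynomial k) (hF : F.Monic) (hdeg : F.natDegree = n)
    (d : k) (v : Fin 3 → k) (hv : v ≠ 0)
    (hH : MvPolynomial.eval v
          (homogenize n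
            (Polynomial.aeval (MvPolynomial.X 1 : MvPolynomial (Fin 2) k) F -
              2 * MvPolynomial.X 0 ^ (n - 1) + MvPolynomial.X 1 ^ (n - 1) -
              MvPolynomial.C d)) = 0)
    (hD : ∀ j : Fin 3, MvPolynomial.eval v
          (MvPolynomial.pderiv j
            (homogenize n
              (Polynomial.aeval (MvPolynomial.X 1 : MvPolynomial (Fin 2) k) F -
                2 * MvPolynomial.X 0 ^ (n - 1) + MvPolynomial.X 1 ^ (n - 1) -
                MvPolynomial.C d))) = 0) :
    ∃ s : k, (Polynomial.derivative (F + Polynomial.X ^ (n - 1))).eval s = 0 ∧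
      (F + Polynomial.X ^ (n - 1)).eval s = d := by
  classical
  -- characteristic facts
  have hp2 : p ≠ 2 := by rintro rfl; exact (by norm_num : ¬ Odd 2) hodd
  have hppos : p ≠ 0 := by rintro rfl; exact (by norm_num : ¬ Odd 0) hodd
  have hprime : p.Prime := (CharP.char_is_prime_or_zero k p).resolve_right hppos
  have h2 : (2 : k) ≠ 0 := by
    intro h
    have : (p : ℕ) ∣ 2 := by
      rwa [show ((2:k) = ((2:ℕ):k)) by norm_num, CharP.cast_eq_zero_iff k p] at h
    exact hp2 ((Nat.prime_dvd_prime_iff_eq hprime Nat.prime_two).mp this)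
  have hnk : ((n : ℕ) : k) ≠ 0 := by
    rw [Ne, CharP.cast_eq_zero_iff k p]
    exact fun h => hpn (h.mul_right _)
  have hn1k : (((n - 1 : ℕ)) : k) ≠ 0 := by
    rw [Ne, CharP.cast_eq_zero_iff k p]
    exact fun h => hpn (h.mul_left _)
  -- membership facts
  have hnmem : n ∈ F.support := by
    rw [Polynomial.mem_support_iff, ← hdeg, hF.coeff_natDegree]; exact one_ne_zero
  have hle : ∀ i ∈ F.support, i ≤ n := fun i hi => hdeg ▸ Polynomial.le_natDegree_of_mem_supp i hi
  have hcn : F.coeff n = 1 := by rw [← hdeg, hF.coeff_natDegree]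
  -- rewrite the homogenization
  have hnn : n - (n - 1) = 1 := by omega
  have hexp := homP_eq n F d
  rw [hnn] at hexp
  rw [hexp] at hH hD
  -- derivative evaluations
  have E0 := hD 0
  have E1 := hD 1
  have E2 := hD 2
  simp only [map_sub, map_add, map_sum, pdM0, pdM1, pdM2, Nat.cast_zero, mul_zero,
    M_zero, Finset.sum_const_zero, evalM, map_zero, pow_zero, pow_one, one_mul, mul_one,
    Nat.cast_one, zero_sub, zero_add, sub_zero, Nat.sub_self, map_neg, add_zero, neg_eq_zero] at E0 E1 E2 hH
  set x := v 0 with hx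
  set t := v 1 with ht
  set z := v 2 with hz
  by_cases hz0 : z = 0
  · -- the line at infinity case: leads to v = 0, contradiction
    exfalso
    rw [hz0] at E1 E2
    have hE1 : (n : k) * t ^ (n - 1) = 0 := by
      rw [← E1, Finset.sum_eq_single_of_mem n hnmem]
      · rw [hcn, Nat.sub_self, pow_zero]
        ring
      · intro i hi hne
        have : (0:k) ^ (n - i) = 0 := zero_pow (by have := hle i hi; omega)
        rw [this]; ring
    have ht0 : t = 0 := by
      rcases mul_eq_zero.mp hE1 with h | h
      · exact absurd h hnk
      · exact pow_eq_zero_iff (by omega : n - 1 ≠ 0) |>.mp h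
    rw [ht0] at E2
    have hs0 : ∑ i ∈ F.support, F.coeff i * ↑(n - i) * (0:k) ^ i * (0:k) ^ (n - i - 1) = 0 :=
      Finset.sum_eq_zero fun i hi => by
        rcases Nat.eq_zero_or_pos i with rfl | hip
        · rw [zero_pow (by omega : n - 0 - 1 ≠ 0)]
          ring
        · rw [zero_pow (by omega : i ≠ 0)]
          ring
    rw [hs0, zero_pow (by omega : n - 1 ≠ 0)] at E2
    have h2x : (2:k) * x ^ (n - 1) = 0 := by linear_combination -E2
    have hx0 : x = 0 := by
      rcases mul_eq_zero.mp h2x with h | h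
      · exact absurd h h2
      · exact pow_eq_zero_iff (by omega : n - 1 ≠ 0) |>.mp h
    exact hv (funext fun j => by fin_cases j <;> first | exact hx0 | exact ht0 | exact hz0)
  · -- affine case
    have hxpow : x ^ (n - 1 - 1) = 0 := by
      have := E0
      rcases mul_eq_zero.mp this with h | h
      · rcases mul_eq_zero.mp h with h' | h'
        · rcases mul_eq_zero.mp h' with h'' | h''
          · exact absurd h'' h2
          · exact absurd h'' hn1k
        · exact h'
      · exact absurd h hz0
    have hn3 : 3 ≤ n := by
      by_contra hlt
      have : n = 2 := by omega
      subst this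
      simp at hxpow
    have hx0 : x = 0 := pow_eq_zero_iff (by omega : n - 1 - 1 ≠ 0) |>.mp hxpow
    set s : k := t * z⁻¹ with hs
    refine ⟨s, ?_, ?_⟩
    · -- derivative vanishes
      have hde : (Polynomial.derivative (F + Polynomial.X ^ (n - 1))).eval s
          = (∑ i ∈ F.support, F.coeff i * i * s ^ (i - 1)) + (n - 1 : ℕ) * s ^ (n - 1 - 1) := by
        rw [map_add, Polynomial.derivative_X_pow, Polynomial.eval_add, Polynomial.eval_mul,
          Polynomial.eval_C, Polynomial.eval_pow, Polynomial.eval_X, evalDF]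
      have hmul : z ^ (n - 1) * ((∑ i ∈ F.support, F.coeff i * i * s ^ (i - 1))
          + (n - 1 : ℕ) * s ^ (n - 1 - 1))
          = ∑ i ∈ F.support, F.coeff i * i * t ^ (i - 1) * z ^ (n - i)
            + (n - 1 : ℕ) * t ^ (n - 1 - 1) * z := by
        rw [mul_add, Finset.mul_sum]
        congr 1
        · refine Finset.sum_congr rfl fun i hi => ?_
          rcases Nat.eq_zero_or_pos i with rfl | hip
          · simp
          · have hiz : z ^ (n - 1) = z ^ (i - 1) * z ^ (n - i) := by
              rw [← pow_add]
              congr 1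
              have := hle i hi
              omega
            rw [hiz, hs, mul_pow, inv_pow]
            field_simp
        · have hiz : z ^ (n - 1) = z ^ (n - 1 - 1) * z := by
            rw [← pow_succ]
            congr 1
            omega
          rw [hiz, hs, mul_pow, inv_pow]
          field_simp
      have : z ^ (n - 1) * ((Polynomial.derivative (F + Polynomial.X ^ (n - 1))).eval s) = 0 := by
        rw [hde, hmul, E1]
      rcases mul_eq_zero.mp this with h | h
      · exact absurd h (pow_ne_zero _ hz0)
      · exact h
    · -- the value of G at s is d
      have hge : (F + Polynomial.X ^ (n - 1)).eval s
          = (∑ i ∈ F.support, F.coeff i * s ^ i) + s ^ (n - 1) := by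
        rw [Polynomial.eval_add, Polynomial.eval_pow, Polynomial.eval_X, evalF]
      have hmul : z ^ n * ((∑ i ∈ F.support, F.coeff i * s ^ i) + s ^ (n - 1))
          = ∑ i ∈ F.support, F.coeff i * t ^ i * z ^ (n - i) + t ^ (n - 1) * z := by
        rw [mul_add, Finset.mul_sum]
        congr 1
        · refine Finset.sum_congr rfl fun i hi => ?_
          have hiz : z ^ n = z ^ i * z ^ (n - i) := by
            rw [← pow_add]
            congr 1
            have := hle i hi
            omega
          rw [hiz, hs, mul_pow, inv_pow]
          field_simp
        · have hiz : z ^ n = z ^ (n - 1) * z := by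
            rw [← pow_succ]
            congr 1
            omega
          rw [hiz, hs, mul_pow, inv_pow]
          field_simp
      have hzn : z ^ n * ((F + Polynomial.X ^ (n - 1)).eval s) = z ^ n * d := by
        rw [hge, hmul]
        have hx : x ^ (n - 1) = 0 := by
          rw [hx0]
          exact zero_pow (by omega)
        rw [hx] at hH
        linear_combination hH
      exact mul_left_cancel₀ (pow_ne_zero _ hz0) hzn
end key


/-- Over an algebraically closed field `k` of odd characteristic
`p`, with `n ≥ 2`, `p ∤ n·(n−1)` and `F ∈ k[t]` monic of degree `n`, the set
of `d ∈ k` for which the degree-`n` homogenization `H_d` of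
`F(t) − 2x^(n−1) + t^(n−1) − d` has a common zero with its three partial
derivatives in `k³ ∖ {0}` (i.e. fails to define a smooth projective plane
curve) has cardinality at most `n − 1`. -/
theorem stmt_8 (k : Type*) [Field k] [IsAlgClosed k] (p : ℕ) (hp : CharP k p)
    (hodd : Odd p) (n : ℕ) (hn : 2 ≤ n) (hpn : ¬ p ∣ n * (n - 1))
    (F : Polynomial k) (hF : F.Monic) (hdeg : F.natDegree = n) :
    ({d : k | ∃ v : Fin 3 → k, v ≠ 0 ∧
        MvPolynomial.eval v
          (homogenize n
            (Polynomial.aeval (MvPolynomial.X 1 : MvPolynomial (Fin 2) k) F -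
              2 * MvPolynomial.X 0 ^ (n - 1) + MvPolynomial.X 1 ^ (n - 1) -
              MvPolynomial.C d)) = 0 ∧
        ∀ j : Fin 3, MvPolynomial.eval v
          (MvPolynomial.pderiv j
            (homogenize n
              (Polynomial.aeval (MvPolynomial.X 1 : MvPolynomial (Fin 2) k) F -
                2 * MvPolynomial.X 0 ^ (n - 1) + MvPolynomial.X 1 ^ (n - 1) -
                MvPolynomial.C d))) = 0}).Finite ∧
    ({d : k | ∃ v : Fin 3 → k, v ≠ 0 ∧
        MvPolynomial.eval v
          (homogenize n
            (Polynomial.aeval (MvPolynomial.X 1 : MvPolynomial (Fin 2) k) F -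
              2 * MvPolynomial.X 0 ^ (n - 1) + MvPolynomial.X 1 ^ (n - 1) -
              MvPolynomial.C d)) = 0 ∧
        ∀ j : Fin 3, MvPolynomial.eval v
          (MvPolynomial.pderiv j
            (homogenize n
              (Polynomial.aeval (MvPolynomial.X 1 : MvPolynomial (Fin 2) k) F -
                2 * MvPolynomial.X 0 ^ (n - 1) + MvPolynomial.X 1 ^ (n - 1) -
                MvPolynomial.C d))) = 0}).ncard ≤ n - 1 := by
  classical
  set G : Polynomial k := F + Polynomial.X ^ (n - 1) with hG
  set R : Set k := {s : k | (Polynomial.derivative G).eval s = 0} with hR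
  -- the bad set is contained in the image of the critical points
  have hsub : {d : k | ∃ v : Fin 3 → k, v ≠ 0 ∧
      MvPolynomial.eval v
        (homogenize n
          (Polynomial.aeval (MvPolynomial.X 1 : MvPolynomial (Fin 2) k) F -
            2 * MvPolynomial.X 0 ^ (n - 1) + MvPolynomial.X 1 ^ (n - 1) -
            MvPolynomial.C d)) = 0 ∧
      ∀ j : Fin 3, MvPolynomial.eval v
        (MvPolynomial.pderiv j
          (homogenize n
            (Polynomial.aeval (MvPolynomial.X 1 : MvPolynomial (Fin 2) k) F -
              2 * MvPolynomial.X 0 ^ (n - 1) + MvPolynomial.X 1 ^ (n - 1) -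
              MvPolynomial.C d))) = 0} ⊆ (fun s => G.eval s) '' R := by
    rintro d ⟨v, hv, hH, hD⟩
    obtain ⟨s, h1, h2⟩ := key p hp hodd n hn hpn F hF hdeg d v hv hH hD
    exact ⟨s, h1, h2⟩
  -- the derivative of G is nonzero
  have hnk : ((n : ℕ) : k) ≠ 0 := by
    rw [Ne, CharP.cast_eq_zero_iff k p]
    exact fun h => hpn (h.mul_right _)
  have hGne : Polynomial.derivative G ≠ 0 := by
    intro h0
    have hc : (Polynomial.derivative G).coeff (n - 1) = ((n : ℕ) : k) := by
      rw [Polynomial.coeff_derivative, hG, Polynomial.coeff_add,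
        Polynomial.coeff_X_pow]
      have h1 : n - 1 + 1 = n := by omega
      rw [h1, ← hdeg, hF.coeff_natDegree]
      have : ¬ (n = n - 1) := by omega
      rw [hdeg, if_neg this]
      rw [Nat.cast_sub (by omega : 1 ≤ n)]
      ring
    rw [h0] at hc
    simp at hc
    exact hnk hc.symm
  -- R is finite with at most n - 1 elements
  have hReq : R = ↑(Polynomial.derivative G).roots.toFinset := by
    ext s
    simp [hR, Polynomial.mem_roots, hGne, Polynomial.IsRoot]
  have hRfin : R.Finite := by
    rw [hReq]
    exact (Polynomial.derivative G).roots.toFinset.finite_toSet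
  have hRcard : R.ncard ≤ n - 1 := by
    rw [hReq, Set.ncard_coe_finset]
    calc (Polynomial.derivative G).roots.toFinset.card
        ≤ Multiset.card (Polynomial.derivative G).roots := Multiset.toFinset_card_le _
      _ ≤ (Polynomial.derivative G).natDegree := Polynomial.card_roots' _
      _ ≤ G.natDegree - 1 := Polynomial.natDegree_derivative_le _
      _ ≤ n - 1 := by
          have h1 : G.natDegree ≤ n := by
            rw [hG]
            refine le_trans (Polynomial.natDegree_add_le _ _) ?_
            simp [hdeg, Polynomial.natDegree_X_pow]
          omega
  refine ⟨(hRfin.image _).subset hsub, ?_⟩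
  calc _ ≤ ((fun s => G.eval s) '' R).ncard :=
        Set.ncard_le_ncard hsub (hRfin.image _)
    _ ≤ R.ncard := Set.ncard_image_le hRfin
    _ ≤ n - 1 := hRcard
end

section
/- Let k be an algebraically closed field of odd characteristic p, let n be an integer with p | (n−1) (so n ≥ 4), and let F ∈ k[t] be monic of degree n. Set f₁ = 2x^(n−1) + x − t^(n−1) + t^(n−2) and f₂ = F(t) − f₁ in k[x,t]. Then both the degree-(n−1) homogenization of f₁ and the degree-n homogenization of f₂ define smooth projective plane curves: each homogenization has no common zero with its three partial derivatives in k³ ∖ {(0,0,0)}. -/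
open MvPolynomial

noncomputable def phiAux (d : ℕ) (m : Fin 2 →₀ ℕ) : Fin 3 →₀ ℕ :=
  Finsupp.single (0 : Fin 3) (m 0) + Finsupp.single (1 : Fin 3) (m 1) +
    Finsupp.single (2 : Fin 3) (d - (m 0 + m 1))

lemma homogenize_eq_mapDomain {K : Type*} [CommSemiring K] (d : ℕ)
    (f : MvPolynomial (Fin 2) K) :
    homogenize d f = AddMonoidAlgebra.mapDomain (phiAux d) f := by
  rw [homogenize, AddMonoidAlgebra.mapDomain, Finsupp.mapDomain,
    AddMonoidAlgebra.ofCoeff_finsuppSum, Finsupp.sum]; rfl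

lemma homogenize_add {K : Type*} [CommSemiring K] (d : ℕ) (f g : MvPolynomial (Fin 2) K) :
    homogenize d (f + g) = homogenize d f + homogenize d g := by
  simp only [homogenize_eq_mapDomain]; exact AddMonoidAlgebra.mapDomain_add _ _ _

lemma homogenize_sub {K : Type*} [CommRing K] (d : ℕ) (f g : MvPolynomial (Fin 2) K) :
    homogenize d (f - g) = homogenize d f - homogenize d g := by
  simp only [homogenize_eq_mapDomain]
  rw [eq_sub_iff_add_eq, ← AddMonoidAlgebra.mapDomain_add, sub_add_cancel]

lemma homogenize_monomial {K : Type*} [CommSemiring K] (d : ℕ) (m : Fin 2 →₀ ℕ) (c : K) :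
    homogenize d (monomial m c) = monomial (phiAux d m) c := by
  rw [homogenize_eq_mapDomain, ← single_eq_monomial, AddMonoidAlgebra.mapDomain_single,
    single_eq_monomial]

lemma homogenize_sum {K : Type*} [CommSemiring K] (d : ℕ) {ι : Type*} (s : Finset ι)
    (f : ι → MvPolynomial (Fin 2) K) :
    homogenize d (∑ i ∈ s, f i) = ∑ i ∈ s, homogenize d (f i) := by
  simp only [homogenize_eq_mapDomain]
  exact map_sum (⟨⟨AddMonoidAlgebra.mapDomain (phiAux d), by simp⟩,
    AddMonoidAlgebra.mapDomain_add _⟩ : MvPolynomial (Fin 2) K →+ MvPolynomial (Fin 3) K) f s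

lemma phiAux_s0 {d a : ℕ} :
    phiAux d (Finsupp.single 0 a) = Finsupp.single 0 a + Finsupp.single 2 (d - a) := by
  simp [phiAux, Finsupp.single_apply]

lemma phiAux_s1 {d a : ℕ} :
    phiAux d (Finsupp.single 1 a) = Finsupp.single 1 a + Finsupp.single 2 (d - a) := by
  simp [phiAux, Finsupp.single_apply]


/-- Over an algebraically closed field `k` of odd characteristic
`p`, with `p ∣ (n−1)` (so `n ≥ 4`) and `F ∈ k[t]` monic of degree `n`, setting
`f₁ = 2x^(n−1) + x − t^(n−1) + t^(n−2)` and `f₂ = F(t) − f₁`, both the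
degree-`(n−1)` homogenization of `f₁` and the degree-`n` homogenization of
`f₂` define smooth projective plane curves: neither has a common zero with its
three partial derivatives in `k³ ∖ {0}`. -/
theorem stmt_9 (k : Type*) [Field k] [IsAlgClosed k] (p : ℕ) (hp : CharP k p)
    (hodd : Odd p) (n : ℕ) (hn : 2 ≤ n) (hpn : p ∣ (n - 1))
    (F : Polynomial k) (hF : F.Monic) (hdeg : F.natDegree = n)
    (f₁ f₂ : MvPolynomial (Fin 2) k)
    (hf₁ : f₁ = 2 * MvPolynomial.X 0 ^ (n - 1) + MvPolynomial.X 0 -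
        MvPolynomial.X 1 ^ (n - 1) + MvPolynomial.X 1 ^ (n - 2))
    (hf₂ : f₂ =
        Polynomial.aeval (MvPolynomial.X 1 : MvPolynomial (Fin 2) k) F - f₁) :
    (∀ v : Fin 3 → k, v ≠ 0 →
      ¬ (MvPolynomial.eval v (homogenize (n - 1) f₁) = 0 ∧
          ∀ j : Fin 3,
            MvPolynomial.eval v
              (MvPolynomial.pderiv j (homogenize (n - 1) f₁)) = 0)) ∧
    (∀ v : Fin 3 → k, v ≠ 0 →
      ¬ (MvPolynomial.eval v (homogenize n f₂) = 0 ∧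
          ∀ j : Fin 3,
            MvPolynomial.eval v
              (MvPolynomial.pderiv j (homogenize n f₂)) = 0)) := by
  -- basic numerics
  have hprime : p.Prime := by
    rcases CharP.char_is_prime_or_zero k p with h | h
    · exact h
    · exact absurd (h ▸ hodd) (by decide)
  have hp3 : 3 ≤ p := by
    have h2 := hprime.two_le
    rcases hodd with ⟨m, hm⟩
    omega
  have hn4 : 4 ≤ n := by
    have h1 : 1 ≤ n - 1 := by omega
    have := Nat.le_of_dvd (by omega) hpn
    omega
  have hc1 : ((n - 1 : ℕ) : k) = 0 := (CharP.cast_eq_zero_iff k p _).mpr hpn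
  have hc2 : ((n - 2 : ℕ) : k) = -1 := by
    have h : (n - 1 : ℕ) = (n - 2) + 1 := by omega
    rw [h, Nat.cast_add, Nat.cast_one] at hc1
    linear_combination hc1
  have h2k : (2 : k) ≠ 0 := by
    intro h
    have := (CharP.cast_eq_zero_iff k p 2).mp (by exact_mod_cast h)
    have := Nat.le_of_dvd (by norm_num) this
    omega
  -- decomposition of f₁ into monomials
  have hf₁' : f₁ = monomial (Finsupp.single 0 (n-1)) (2:k)
       + monomial (Finsupp.single 0 1) 1
       - monomial (Finsupp.single 1 (n-1)) 1
       + monomial (Finsupp.single 1 (n-2)) 1 := by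
    rw [hf₁, (map_ofNat (C : k →+* MvPolynomial (Fin 2) k) 2).symm,
      C_mul_X_pow_eq_monomial, X_pow_eq_monomial, X_pow_eq_monomial,
      show (X 0 : MvPolynomial (Fin 2) k) = monomial (Finsupp.single 0 1) 1 from rfl]
  -- homogenization of f₁ at degree n-1
  have hG1 : homogenize (n-1) f₁
      = monomial (Finsupp.single 0 (n-1)) (2:k)
      + monomial (Finsupp.single 0 1 + Finsupp.single 2 (n-2)) 1
      - monomial (Finsupp.single 1 (n-1)) 1
      + monomial (Finsupp.single 1 (n-2) + Finsupp.single 2 1) 1 := by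
    rw [hf₁', homogenize_add, homogenize_sub, homogenize_add,
      homogenize_monomial, homogenize_monomial, homogenize_monomial, homogenize_monomial,
      phiAux_s0, phiAux_s0, phiAux_s1, phiAux_s1]
    have e1 : n - 1 - (n - 1) = 0 := by omega
    have e2 : n - 1 - 1 = n - 2 := by omega
    have e3 : n - 1 - (n - 2) = 1 := by omega
    rw [e1, e2, e3]
    simp
  constructor
  · -- curve 1
    intro v hv ⟨he, hd⟩
    have hZ : v 2 = 0 := by
      have h0 := hd 0
      rw [hG1] at h0
      have e2 : n - 1 - 1 = n - 2 := by omega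
      simp only [map_add, map_sub, pderiv_monomial, eval_monomial,
        Finsupp.prod_fintype _ _ (fun i => pow_zero _), Fin.prod_univ_three,
        Finsupp.tsub_apply, Finsupp.add_apply, Finsupp.single_apply] at h0
      simp [e2, hc1] at h0
      exact h0.1
    have hT : v 1 = 0 := by
      have h0 := hd 2
      rw [hG1] at h0
      simp only [map_add, map_sub, pderiv_monomial, eval_monomial,
        Finsupp.prod_fintype _ _ (fun i => pow_zero _), Fin.prod_univ_three,
        Finsupp.tsub_apply, Finsupp.add_apply, Finsupp.single_apply] at h0
      simp [hc2, hZ, zero_pow (show n - 2 - 1 ≠ 0 by omega)] at h0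
      exact h0.1
    have hX : v 0 = 0 := by
      rw [hG1] at he
      simp only [map_add, map_sub, eval_monomial,
        Finsupp.prod_fintype _ _ (fun i => pow_zero _), Fin.prod_univ_three,
        Finsupp.add_apply, Finsupp.single_apply] at he
      simp [hZ, hT, zero_pow (show n - 1 ≠ 0 by omega),
        zero_pow (show n - 2 ≠ 0 by omega), h2k] at he
      exact he.1
    apply hv
    funext i
    fin_cases i <;> simpa [hX, hT, hZ]
  · -- curve 2
    have hA : Polynomial.aeval (MvPolynomial.X 1 : MvPolynomial (Fin 2) k) F
        = ∑ j ∈ F.support, monomial (Finsupp.single 1 j) (F.coeff j) := by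
      rw [Polynomial.aeval_def, Polynomial.eval₂_eq_sum, Polynomial.sum]
      refine Finset.sum_congr rfl fun j _ => ?_
      rw [algebraMap_eq, C_mul_X_pow_eq_monomial]
    have hG2 : homogenize n f₂
        = (∑ j ∈ F.support,
            monomial (Finsupp.single 1 j + Finsupp.single 2 (n - j)) (F.coeff j))
        - ((monomial (Finsupp.single 0 (n-1) + Finsupp.single 2 1) (2:k))
          + monomial (Finsupp.single 0 1 + Finsupp.single 2 (n-1)) 1
          - monomial (Finsupp.single 1 (n-1) + Finsupp.single 2 1) 1
          + monomial (Finsupp.single 1 (n-2) + Finsupp.single 2 2) 1) := by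
      rw [hf₂, homogenize_sub, hA, homogenize_sum, hf₁', homogenize_add, homogenize_sub,
        homogenize_add, homogenize_monomial, homogenize_monomial, homogenize_monomial,
        homogenize_monomial, phiAux_s0, phiAux_s0, phiAux_s1, phiAux_s1]
      have e1 : n - (n - 1) = 1 := by omega
      have e3 : n - (n - 2) = 2 := by omega
      rw [e1, e3]
      congr 1
      refine Finset.sum_congr rfl fun j _ => ?_
      rw [homogenize_monomial, phiAux_s1]
    intro v hv ⟨he, hd⟩
    have hsupp : ∀ j ∈ F.support, j ≤ n := fun j hj => by
      have := Polynomial.le_natDegree_of_ne_zero (Polynomial.mem_support_iff.mp hj)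
      omega
    have hZ : v 2 = 0 := by
      have h0 := hd 0
      rw [hG2] at h0
      rw [map_sub, map_sub, map_sum, map_sum] at h0
      have hz : (∑ j ∈ F.support, eval v (pderiv 0
          (monomial (Finsupp.single 1 j + Finsupp.single 2 (n - j)) (F.coeff j)))) = 0 := by
        refine Finset.sum_eq_zero fun j hj => ?_
        simp [pderiv_monomial, Finsupp.add_apply, Finsupp.single_apply]
      rw [hz, zero_sub, neg_eq_zero] at h0
      have e2 : n - 1 - 1 = n - 2 := by omega
      simp only [map_add, map_sub, pderiv_monomial, eval_monomial,
        Finsupp.prod_fintype _ _ (fun i => pow_zero _), Fin.prod_univ_three,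
        Finsupp.tsub_apply, Finsupp.add_apply, Finsupp.single_apply] at h0
      simp [e2, hc1] at h0
      exact h0.1
    have hT : v 1 = 0 := by
      rw [hG2] at he
      rw [map_sub, map_sum] at he
      have hz1 : (∑ j ∈ F.support, eval v
          (monomial (Finsupp.single 1 j + Finsupp.single 2 (n - j)) (F.coeff j)))
          = v 1 ^ n := by
        rw [Finset.sum_eq_single n]
        · simp only [eval_monomial, Finsupp.prod_fintype _ _ (fun i => pow_zero _),
            Fin.prod_univ_three, Finsupp.add_apply, Finsupp.single_apply]
          have : F.coeff n = 1 := by rw [← hdeg]; exact hF.coeff_natDegree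
          simp [this]
        · intro j hj hjn
          simp only [eval_monomial, Finsupp.prod_fintype _ _ (fun i => pow_zero _),
            Fin.prod_univ_three, Finsupp.add_apply, Finsupp.single_apply]
          have hjle := hsupp j hj
          simp [hZ, zero_pow (show n - j ≠ 0 by omega)]
        · intro hns
          have hcn : F.coeff n = 1 := by rw [← hdeg]; exact hF.coeff_natDegree
          exact absurd (Polynomial.mem_support_iff.mpr (hcn ▸ one_ne_zero)) hns
      rw [hz1] at he
      simp only [map_add, map_sub, eval_monomial,
        Finsupp.prod_fintype _ _ (fun i => pow_zero _), Fin.prod_univ_three,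
        Finsupp.add_apply, Finsupp.single_apply] at he
      simp [hZ, zero_pow (show n - 1 ≠ 0 by omega)] at he
      exact he.1
    have hX : v 0 = 0 := by
      have h0 := hd 2
      rw [hG2] at h0
      rw [map_sub, map_sub, map_sum, map_sum] at h0
      have hz : (∑ j ∈ F.support, eval v (pderiv 2
          (monomial (Finsupp.single 1 j + Finsupp.single 2 (n - j)) (F.coeff j)))) = 0 := by
        refine Finset.sum_eq_zero fun j hj => ?_
        simp only [pderiv_monomial, eval_monomial,
          Finsupp.prod_fintype _ _ (fun i => pow_zero _), Fin.prod_univ_three,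
          Finsupp.tsub_apply, Finsupp.add_apply, Finsupp.single_apply]
        rcases Nat.eq_zero_or_pos j with hj0 | hj0
        · subst hj0
          simp [hZ]
          exact Or.inr (by omega)
        · simp [hT, zero_pow (show j ≠ 0 by omega)]
      rw [hz, zero_sub, neg_eq_zero] at h0
      simp only [map_add, map_sub, pderiv_monomial, eval_monomial,
        Finsupp.prod_fintype _ _ (fun i => pow_zero _), Fin.prod_univ_three,
        Finsupp.tsub_apply, Finsupp.add_apply, Finsupp.single_apply] at h0
      simp [hZ, hT, zero_pow (show n - 1 - 1 ≠ 0 by omega),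
        zero_pow (show n - 1 ≠ 0 by omega), zero_pow (show n - 2 ≠ 0 by omega), h2k] at h0
      exact h0.1
    apply hv
    funext i
    fin_cases i <;> simpa [hX, hT, hZ]
end
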